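/- For any totally positive element α of a totally real number field F of degree n, and any ε > 0, there exists a nonzero element c in the ring of integers O_F such that Tr(c²α)/N(c²α)^{1/n} < n + ε. -/

import Mathlib

open Finset

/-- The span over ℝ of the image of a field `F` under finitely many distinct
real embeddings is everything. -/
lemma span_range_embeddings_eq_top {F : Type*} [Field F] {ι : Type*} [Fintype ι]
    (ψ : ι → (F →+* ℝ)) (hinj : Function.Injective ψ) :
    Submodule.span ℝ (Set.range fun x : F => fun φ => ψ φ x) = ⊤ := by
  classical
  by_contra h
  obtain ⟨f, hf0, hf⟩ := Submodule.exists_dual_map_eq_bot_of_lt_top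
    (lt_top_iff_ne_top.mpr h) inferInstance
  set c : ι → ℝ := fun φ => f (fun j => if φ = j then 1 else 0) with hc
  have hfv : ∀ v : ι → ℝ, f v = ∑ φ, v φ * c φ := by
    intro v
    conv_lhs => rw [pi_eq_sum_univ v]
    rw [map_sum]
    simp [c, smul_eq_mul]
  have hmem : ∀ x : F, f (fun φ => ψ φ x) = 0 := by
    intro x
    have : (fun φ => ψ φ x) ∈ Submodule.span ℝ
        (Set.range fun x : F => fun φ => ψ φ x) :=
      Submodule.subset_span (Set.mem_range_self x)
    have := Submodule.mem_map_of_mem (f := f) this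
    rw [hf] at this
    simpa using this
  have hli : LinearIndependent ℝ (fun φ : ι => ((ψ φ : F →* ℝ) : F → ℝ)) := by
    refine (linearIndependent_monoidHom F ℝ).comp (fun φ => (ψ φ : F →* ℝ)) ?_
    intro φ φ' hφ
    exact hinj (RingHom.ext fun x => DFunLike.congr_fun hφ x)
  have hc0 : ∀ φ, c φ = 0 := by
    have := Fintype.linearIndependent_iff.mp hli c ?_
    · exact this
    · funext x
      have := hmem x
      rw [hfv] at this
      simpa [mul_comm] using this
  apply hf0
  refine LinearMap.ext fun v => ?_
  rw [hfv]
  simp [hc0]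

/-- Weak approximation at the real places: values of `F` under finitely many distinct
real embeddings are dense in `ℝ^ι`. -/
lemma exists_approx {F : Type*} [Field F] {ι : Type*} [Fintype ι]
    (ψ : ι → (F →+* ℝ)) (hinj : Function.Injective ψ) (t : ι → ℝ) {δ : ℝ} (hδ : 0 < δ) :
    ∃ x : F, ∀ φ, |ψ φ x - t φ| < δ := by
  classical
  have ht : t ∈ Submodule.span ℝ (Set.range fun x : F => fun φ => ψ φ x) := by
    rw [span_range_embeddings_eq_top ψ hinj]; trivial
  obtain ⟨l, hl, hsum⟩ := Submodule.mem_span_set.mp ht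
  set s := l.support with hs
  set M : ℝ := 1 + ∑ v ∈ s, ‖v‖ with hM
  have hM0 : 0 < M := by positivity
  have hδM : 0 < δ / M := div_pos hδ hM0
  -- choose a preimage for each element of the support
  have hpre : ∀ v ∈ s, ∃ x : F, (fun φ => ψ φ x) = v := fun v hv => hl hv
  set xv : (ι → ℝ) → F := fun v =>
    if h : ∃ x : F, (fun φ => ψ φ x) = v then h.choose else 0 with hxv
  have hxv' : ∀ v ∈ s, (fun φ => ψ φ (xv v)) = v := by
    intro v hv
    have h := hpre v hv
    simp only [hxv, dif_pos h]
    exact h.choose_spec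
  -- choose rational approximations of the coefficients
  set q : (ι → ℝ) → ℚ := fun v => (exists_rat_near (l v) hδM).choose with hq
  have hqv : ∀ v, |l v - q v| < δ / M := fun v => (exists_rat_near (l v) hδM).choose_spec
  refine ⟨∑ v ∈ s, (q v : ℚ) • xv v, fun φ => ?_⟩
  have htφ : t φ = ∑ v ∈ s, l v * v φ := by
    rw [← hsum]
    rw [Finsupp.sum]
    simp [smul_eq_mul, s]
  have hψx : ψ φ (∑ v ∈ s, (q v : ℚ) • xv v) = ∑ v ∈ s, (q v : ℝ) * v φ := by
    rw [map_sum]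
    refine Finset.sum_congr rfl fun v hv => ?_
    rw [Rat.smul_def, map_mul, map_ratCast,
      show (ψ φ) (xv v) = v φ from congrFun (hxv' v hv) φ]
  rw [hψx, htφ, ← Finset.sum_sub_distrib]
  calc |∑ v ∈ s, ((q v : ℝ) * v φ - l v * v φ)|
      ≤ ∑ v ∈ s, |(q v : ℝ) * v φ - l v * v φ| := Finset.abs_sum_le_sum_abs _ _
    _ ≤ ∑ v ∈ s, (δ / M) * ‖v‖ := by
        refine Finset.sum_le_sum fun v hv => ?_
        rw [← sub_mul, abs_mul]
        have h1 : |(q v : ℝ) - l v| ≤ δ / M := by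
          rw [abs_sub_comm]; exact (hqv v).le
        have h2 : |v φ| ≤ ‖v‖ := by
          simpa using norm_le_pi_norm v φ
        exact mul_le_mul h1 h2 (abs_nonneg _) hδM.le
    _ = (δ / M) * ∑ v ∈ s, ‖v‖ := by rw [Finset.mul_sum]
    _ < δ := by
        rw [div_mul_eq_mul_div, mul_comm, ← div_mul_eq_mul_div]
        have : (∑ v ∈ s, ‖v‖) / M < 1 := by
          rw [div_lt_one hM0, hM]
          linarith
        nlinarith [this, hδ]

open NumberField Module

/-- For any totally positive element `α` of a totally real number field `F`
of degree `n`, and any `ε > 0`, there exists a nonzero `c ∈ 𝓞 F` such that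
`Tr(c²α) / N(c²α)^(1/n) < n + ε`. -/
theorem exists_trace_div_norm_rpow_lt
    (F : Type*) [Field F] [NumberField F] (n : ℕ)
    (hdeg : finrank ℚ F = n)
    (htotreal : ∀ v : InfinitePlace F, v.IsReal)
    (α : F) (hα : ∀ τ : F →+* ℝ, 0 < τ α)
    (ε : ℝ) (hε : 0 < ε) :
    ∃ c : 𝓞 F, c ≠ 0 ∧
      ((Algebra.trace ℚ F ((c : F) ^ 2 * α) : ℝ) /
          (Algebra.norm ℚ ((c : F) ^ 2 * α) : ℝ) ^ ((n : ℝ)⁻¹) : ℝ) < n + ε := by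
  classical
  have hn : 0 < n := hdeg ▸ finrank_pos
  have hcard : Fintype.card (F →+* ℂ) = n := hdeg ▸ NumberField.Embeddings.card F ℂ
  have hne : Nonempty (F →+* ℂ) := Fintype.card_pos_iff.mp (hcard ▸ hn)
  -- real embeddings
  have hre : ∀ φ : F →+* ℂ, ComplexEmbedding.IsReal φ := fun φ =>
    NumberField.InfinitePlace.isReal_mk_iff.mp (htotreal _)
  set ψ : (F →+* ℂ) → (F →+* ℝ) := fun φ => (hre φ).embedding with hψ
  have hψφ : ∀ (φ : F →+* ℂ) (x : F), ((ψ φ x : ℝ) : ℂ) = φ x := fun φ x =>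
    ComplexEmbedding.IsReal.coe_embedding_apply (hre φ) x
  have hψinj : Function.Injective ψ := by
    intro φ φ' h
    ext x
    rw [← hψφ φ x, ← hψφ φ' x, h]
  -- trace and norm formulas
  have htr : ∀ y : F, (Algebra.trace ℚ F y : ℝ) = ∑ φ : F →+* ℂ, ψ φ y := by
    intro y
    have h1 : algebraMap ℚ ℂ (Algebra.trace ℚ F y) = ∑ σ : F →ₐ[ℚ] ℂ, σ y :=
      trace_eq_sum_embeddings (E := ℂ)
    have h2 : ∑ σ : F →ₐ[ℚ] ℂ, σ y = ∑ φ : F →+* ℂ, φ y :=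
      (Fintype.sum_equiv (RingHom.equivRatAlgHom F ℂ) (fun φ : F →+* ℂ => φ y)
        (fun σ : F →ₐ[ℚ] ℂ => σ y) (fun φ => by
          rw [RingHom.equivRatAlgHom_apply]; rfl)).symm
    have : ((((Algebra.trace ℚ F y : ℚ) : ℝ)) : ℂ) = ((∑ φ : F →+* ℂ, ψ φ y : ℝ) : ℂ) := by
      push_cast
      rw [show ((Algebra.trace ℚ F y : ℚ) : ℂ) = algebraMap ℚ ℂ (Algebra.trace ℚ F y) from rfl,
        h1, h2]
      exact Finset.sum_congr rfl fun φ _ => (hψφ φ y).symm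
    exact_mod_cast this
  have hnm : ∀ y : F, (Algebra.norm ℚ y : ℝ) = ∏ φ : F →+* ℂ, ψ φ y := by
    intro y
    have h1 : algebraMap ℚ ℂ (Algebra.norm ℚ y) = ∏ σ : F →ₐ[ℚ] ℂ, σ y :=
      Algebra.norm_eq_prod_embeddings ℚ ℂ y
    have h2 : ∏ σ : F →ₐ[ℚ] ℂ, σ y = ∏ φ : F →+* ℂ, φ y :=
      (Fintype.prod_equiv (RingHom.equivRatAlgHom F ℂ) (fun φ : F →+* ℂ => φ y)
        (fun σ : F →ₐ[ℚ] ℂ => σ y) (fun φ => by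
          rw [RingHom.equivRatAlgHom_apply]; rfl)).symm
    have : ((((Algebra.norm ℚ y : ℚ) : ℝ)) : ℂ) = ((∏ φ : F →+* ℂ, ψ φ y : ℝ) : ℂ) := by
      push_cast
      rw [show ((Algebra.norm ℚ y : ℚ) : ℂ) = algebraMap ℚ ℂ (Algebra.norm ℚ y) from rfl,
        h1, h2]
      exact Finset.prod_congr rfl fun φ _ => (hψφ φ y).symm
    exact_mod_cast this
  -- the data
  set a : (F →+* ℂ) → ℝ := fun φ => ψ φ α with ha
  have ha0 : ∀ φ, 0 < a φ := fun φ => hα (ψ φ)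
  set t : (F →+* ℂ) → ℝ := fun φ => 1 / Real.sqrt (a φ) with htdef
  have ht0 : ∀ φ, 0 < t φ := fun φ => by
    simp only [htdef, one_div, inv_pos]
    exact Real.sqrt_pos.mpr (ha0 φ)
  have ht2 : ∀ φ, (t φ) ^ 2 * a φ = 1 := by
    intro φ
    simp only [htdef, one_div, inv_pow]
    rw [Real.sq_sqrt (ha0 φ).le, inv_mul_cancel₀ (ha0 φ).ne']
  -- the continuous functional
  set G : ((F →+* ℂ) → ℝ) → ℝ := fun v =>
    (∑ φ, (v φ) ^ 2 * a φ) / (∏ φ, (v φ) ^ 2 * a φ) ^ ((n : ℝ)⁻¹) with hG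
  have hGt : G t = n := by
    simp only [hG]
    rw [Finset.sum_congr rfl fun φ _ => ht2 φ, Finset.prod_congr rfl fun φ _ => ht2 φ]
    simp [hcard]
  have hcont : ContinuousAt G t := by
    have hnum : Continuous fun v : (F →+* ℂ) → ℝ => ∑ φ, (v φ) ^ 2 * a φ := by
      exact continuous_finset_sum _ fun φ _ => ((continuous_apply φ).pow 2).mul continuous_const
    have hden : Continuous fun v : (F →+* ℂ) → ℝ => ∏ φ, (v φ) ^ 2 * a φ := by
      exact continuous_finset_prod _ fun φ _ => ((continuous_apply φ).pow 2).mul continuous_const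
    have hden1 : (∏ φ, (t φ) ^ 2 * a φ) = 1 := by
      rw [Finset.prod_congr rfl fun φ _ => ht2 φ]; simp
    refine ContinuousAt.div hnum.continuousAt ?_ ?_
    · exact (hden.continuousAt).rpow_const (Or.inl (by rw [hden1]; norm_num))
    · rw [hden1, Real.one_rpow]; norm_num
  -- eventual bound
  have hev : ∀ᶠ v in nhds t, G v < n + ε := by
    have : Filter.Tendsto G (nhds t) (nhds ((n : ℝ))) := hGt ▸ hcont
    exact this.eventually_lt_const (by linarith)
  obtain ⟨δ, hδ0, hδ⟩ := Metric.eventually_nhds_iff.mp hev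
  -- shrink δ so that approximants have positive coordinates
  set T : ℝ := Finset.univ.inf' (Finset.univ_nonempty) t with hT
  have hT0 : 0 < T := by
    rw [hT]
    exact (Finset.lt_inf'_iff _).mpr fun φ _ => ht0 φ
  set δ' : ℝ := min (δ / 2) T with hδ'
  have hδ'0 : 0 < δ' := lt_min (by linarith) hT0
  obtain ⟨x, hx⟩ := exists_approx ψ hψinj t hδ'0
  set v : (F →+* ℂ) → ℝ := fun φ => ψ φ x with hv
  have hvpos : ∀ φ, 0 < v φ := by
    intro φ
    have h1 := hx φ
    have h2 : δ' ≤ t φ := le_trans (min_le_right _ _) (Finset.inf'_le _ (Finset.mem_univ φ))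
    have := abs_lt.mp h1
    simp only [hv]
    linarith [this.1]
  have hGv : G v < n + ε := by
    apply hδ
    rw [dist_pi_lt_iff hδ0]
    intro φ
    rw [Real.dist_eq]
    exact lt_of_lt_of_le (hx φ) (le_trans (min_le_left _ _) (by linarith))
  have hx0 : x ≠ 0 := by
    intro h
    have := hvpos (Classical.arbitrary _)
    simp [hv, h] at this
  -- clear denominators
  have halg : IsAlgebraic ℤ x :=
    (IsFractionRing.isAlgebraic_iff ℤ ℚ F).mpr (Algebra.IsAlgebraic.isAlgebraic x)
  obtain ⟨cInt, m, hm0, hmx⟩ : ∃ cInt : integralClosure ℤ F, ∃ m : ℤ, m ≠ 0 ∧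
      algebraMap ℤ F m * x = cInt := by
    obtain ⟨m, hm0, hint⟩ := halg.exists_integral_multiple
    exact ⟨⟨m • x, hint⟩, m, hm0, by simp [zsmul_eq_mul]⟩
  set c0 : 𝓞 F := ⟨(cInt : F), cInt.2⟩ with hc0def
  have hcF : (c0 : F) = algebraMap ℤ F m * x := hmx.symm
  refine ⟨c0, ?_, ?_⟩
  · intro h
    have h0 : (c0 : F) = 0 := by rw [h]; simp
    rw [hcF] at h0
    rcases mul_eq_zero.mp h0 with h | h
    · exact hm0 (by simpa using h)
    · exact hx0 h
  · -- the estimate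
    set y : F := x ^ 2 * α with hy
    -- trace and norm of y
    have htry : (Algebra.trace ℚ F y : ℝ) = ∑ φ, (v φ) ^ 2 * a φ := by
      rw [htr]
      exact Finset.sum_congr rfl fun φ _ => by simp [hy, hv, ha, map_mul, map_pow]
    have hnmy : (Algebra.norm ℚ y : ℝ) = ∏ φ, (v φ) ^ 2 * a φ := by
      rw [hnm]
      exact Finset.prod_congr rfl fun φ _ => by simp [hy, hv, ha, map_mul, map_pow]
    have hnmy0 : 0 < (Algebra.norm ℚ y : ℝ) := by
      rw [hnmy]
      exact Finset.prod_pos fun φ _ => mul_pos (pow_pos (hvpos φ) 2) (ha0 φ)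
    -- express c² α in terms of y
    have hcy : (c0 : F) ^ 2 * α = algebraMap ℚ F ((m : ℚ) ^ 2) * y := by
      rw [hcF, hy]
      have : algebraMap ℤ F m = algebraMap ℚ F (m : ℚ) := by
        simp [IsScalarTower.algebraMap_apply ℤ ℚ F]
      rw [this]
      push_cast
      ring
    rw [hcy]
    have htrc : (Algebra.trace ℚ F (algebraMap ℚ F ((m : ℚ) ^ 2) * y) : ℝ)
        = ((m : ℝ)) ^ 2 * (Algebra.trace ℚ F y : ℝ) := by
      rw [show algebraMap ℚ F ((m : ℚ) ^ 2) * y = ((m : ℚ) ^ 2) • y from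
        (Algebra.smul_def _ _).symm, map_smul, smul_eq_mul]
      push_cast
      ring
    have hnmc : (Algebra.norm ℚ (algebraMap ℚ F ((m : ℚ) ^ 2) * y) : ℝ)
        = ((m : ℝ)) ^ (2 * n) * (Algebra.norm ℚ y : ℝ) := by
      rw [map_mul, Algebra.norm_algebraMap, hdeg]
      push_cast
      ring
    rw [htrc, hnmc]
    have hm2 : (0 : ℝ) < (m : ℝ) ^ 2 := by
      have : (m : ℝ) ≠ 0 := by exact_mod_cast hm0
      positivity
    have hrpow : (((m : ℝ)) ^ (2 * n) * (Algebra.norm ℚ y : ℝ)) ^ ((n : ℝ)⁻¹)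
        = ((m : ℝ)) ^ 2 * ((Algebra.norm ℚ y : ℝ)) ^ ((n : ℝ)⁻¹) := by
      have hpow : ((m : ℝ)) ^ (2 * n) = (((m : ℝ)) ^ 2) ^ (n : ℕ) := by
        rw [← pow_mul]
      rw [hpow, Real.mul_rpow (pow_nonneg hm2.le _) hnmy0.le,
        ← Real.rpow_natCast (((m : ℝ)) ^ 2) n, ← Real.rpow_mul hm2.le]
      rw [mul_inv_cancel₀ (by exact_mod_cast hn.ne' : (n : ℝ) ≠ 0), Real.rpow_one]
    rw [hrpow, mul_div_mul_left _ _ (ne_of_gt hm2)]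
    calc (Algebra.trace ℚ F y : ℝ) / ((Algebra.norm ℚ y : ℝ)) ^ ((n : ℝ)⁻¹)
        = G v := by rw [hG, htry, hnmy]
      _ < n + ε := hGv
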